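/- Let R > 0, s > 0, G > 0 and let π, L, U be real numbers with π < L, π < U, and 2R(U−π) > L−π, and let α be a real number with α ≥ ln((2R(U−π))/(L−π)). Then for all real numbers y₀ ≤ y₁ the grid-regime price p₂(y) = ((L−π)/(2R))·((2R(U−π))/(L−π))^(y/(s+G)) + π satisfies ∫_{y₀}^{y₁} (p₂(y) − π) dy ≥ (1/α)·(s+G)·(p₂(y₁) − p₂(y₀)). (Integrated allocation–payment inequality: payment minus operational cost covers a 1/α fraction of the increase of the Fenchel conjugate f*(p) = (s+G)·p − G·π along the price path.) -/

import Mathlib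

lemma integral_exp_const_mul (k y₀ y₁ : ℝ) (hk : k ≠ 0) :
    ∫ y in y₀..y₁, Real.exp (k * y) = (Real.exp (k * y₁) - Real.exp (k * y₀)) / k := by
  have h : ∀ y ∈ Set.uIcc y₀ y₁,
      HasDerivAt (fun y => Real.exp (k * y) / k) (Real.exp (k * y)) y := by
    intro y _
    have : HasDerivAt (fun y => Real.exp (k * y)) (Real.exp (k * y) * k) y := by
      exact ((Real.hasDerivAt_exp (k * y)).comp y ((hasDerivAt_id y).const_mul k)).congr_deriv (by ring)
    simpa [mul_div_assoc, mul_div_cancel_right₀ _ hk] using this.div_const k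
  have := intervalIntegral.integral_eq_sub_of_hasDerivAt h
    ((Real.continuous_exp.comp (continuous_const.mul continuous_id)).intervalIntegrable y₀ y₁)
  rw [this]; ring

/-- Integrated allocation–payment inequality in the grid regime: for
`y₀ ≤ y₁`, payment minus operational cost, `∫_{y₀}^{y₁} (p₂(y) − π) dy`,
covers a `1/α` fraction of the increase of the Fenchel conjugate
`f*(p) = (s+G)·p − G·π` along the price path, where
`p₂(y) = ((L−π)/(2R))·(2R(U−π)/(L−π))^(y/(s+G)) + π`. -/
theorem grid_integrated_allocation_payment
    (R s G π L U α : ℝ) (hR : 0 < R) (hs : 0 < s) (hG : 0 < G)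
    (hπL : π < L) (hπU : π < U) (hbase : L - π < 2 * R * (U - π))
    (hα : Real.log (2 * R * (U - π) / (L - π)) ≤ α)
    (y₀ y₁ : ℝ) (hy : y₀ ≤ y₁) :
    (∫ y in y₀..y₁,
        (((L - π) / (2 * R) * (2 * R * (U - π) / (L - π)) ^ (y / (s + G)) + π) - π)) ≥
      (1 / α) * (s + G) *
        (((L - π) / (2 * R) * (2 * R * (U - π) / (L - π)) ^ (y₁ / (s + G)) + π)
          - ((L - π) / (2 * R) * (2 * R * (U - π) / (L - π)) ^ (y₀ / (s + G)) + π)) := by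
  set b : ℝ := 2 * R * (U - π) / (L - π) with hb
  set c : ℝ := (L - π) / (2 * R) with hc
  set T : ℝ := s + G with hT
  have hLπ : 0 < L - π := by linarith
  have hT0 : 0 < T := by positivity
  have hc0 : 0 < c := by positivity
  have hb1 : 1 < b := (one_lt_div hLπ).mpr hbase
  have hb0 : 0 < b := lt_trans one_pos hb1
  have hlb : 0 < Real.log b := Real.log_pos hb1
  have hα0 : 0 < α := lt_of_lt_of_le hlb hα
  set k : ℝ := Real.log b / T with hk
  have hk0 : 0 < k := by positivity
  have hrw : ∀ y : ℝ, b ^ (y / T) = Real.exp (k * y) := by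
    intro y
    rw [Real.rpow_def_of_pos hb0]
    ring_nf
    congr 1; rw [hk]; ring
  have hint : (∫ y in y₀..y₁, (c * b ^ (y / T) + π - π)) =
      c * ((Real.exp (k * y₁) - Real.exp (k * y₀)) / k) := by
    simp only [add_sub_cancel_right, hrw]
    rw [intervalIntegral.integral_const_mul, integral_exp_const_mul _ _ _ (ne_of_gt hk0)]
  rw [hint]
  have hd : 0 ≤ Real.exp (k * y₁) - Real.exp (k * y₀) := by
    have := Real.exp_le_exp.mpr (mul_le_mul_of_nonneg_left hy hk0.le)
    linarith
  have hgoal : (1 / α) * T * (c * Real.exp (k * y₁) + π - (c * Real.exp (k * y₀) + π))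
      ≤ c * ((Real.exp (k * y₁) - Real.exp (k * y₀)) / k) := by
    have h1 : (1 / α) * T * (c * Real.exp (k * y₁) + π - (c * Real.exp (k * y₀) + π))
        = c * (Real.exp (k * y₁) - Real.exp (k * y₀)) * (T / α) := by ring
    have h2 : c * ((Real.exp (k * y₁) - Real.exp (k * y₀)) / k)
        = c * (Real.exp (k * y₁) - Real.exp (k * y₀)) * (T / Real.log b) := by
      rw [hk]; field_simp
    rw [h1, h2]
    apply mul_le_mul_of_nonneg_left _ (by positivity)
    exact div_le_div_of_nonneg_left hT0.le hlb hα
  simpa [hrw] using hgoal
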